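/- Let N ≥ 2 be an integer, r ∈ (0, 1/(N-1)], p = 1 - (N-1)r, and let π_k = 1/N + ((N-1)/N)(p-r)^k. Define a_j = Σ_{k=0}^{j} (j-k)·(1-p)·(1-r)^{j-k-1}·π_k for j ≥ 0 (with the convention that the k = j term, having factor (j-k) = 0, vanishes). Then a_j = (N-1)/(Nr) + (p-r)^{j+1}/(Nr) - (1-r)^{j+1}/r. -/

import Mathlib

theorem stmt_1 (N : ℕ) (hN : 2 ≤ N) (r p : ℝ)
    (hr : 0 < r) (hr' : r ≤ 1 / ((N : ℝ) - 1))
    (hp : p = 1 - ((N : ℝ) - 1) * r)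
    (π : ℕ → ℝ)
    (hπ : ∀ k, π k = 1 / (N : ℝ) + (((N : ℝ) - 1) / (N : ℝ)) * (p - r) ^ k)
    (a : ℕ → ℝ)
    (ha : ∀ j, a j =
      ∑ k ∈ Finset.range (j + 1), ((j : ℝ) - (k : ℝ)) * (1 - p) * (1 - r) ^ (j - k - 1) * π k) :
    ∀ j, a j = ((N : ℝ) - 1) / ((N : ℝ) * r) + (p - r) ^ (j + 1) / ((N : ℝ) * r)
      - (1 - r) ^ (j + 1) / r := by
  have hNR : (N : ℝ) ≠ 0 := by
    have : (2:ℝ) ≤ (N:ℝ) := by exact_mod_cast hN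
    linarith
  have hrne : r ≠ 0 := ne_of_gt hr
  -- closed form for S j = ∑ (1-r)^(j-k) * π k
  have hS : ∀ j, (∑ k ∈ Finset.range (j + 1), (1 - r) ^ (j - k) * π k)
      = (1 - (p - r) ^ (j + 1)) / ((N : ℝ) * r) := by
    intro j
    induction j with
    | zero =>
      simp [hπ, hp]
      field_simp
      ring
    | succ j ih =>
      rw [Finset.sum_range_succ]
      have hcong : ∀ k ∈ Finset.range (j + 1),
          (1 - r) ^ (j + 1 - k) * π k = (1 - r) * ((1 - r) ^ (j - k) * π k) := by
        intro k hk
        have hk' : k ≤ j := Nat.lt_succ_iff.mp (Finset.mem_range.mp hk)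
        have : j + 1 - k = (j - k) + 1 := by omega
        rw [this, pow_succ]
        ring
      rw [Finset.sum_congr rfl hcong, ← Finset.mul_sum, ih, hπ, Nat.sub_self, pow_zero, hp]
      field_simp
      ring
  -- recurrence for a
  have hrec : ∀ j, a (j + 1) = (1 - r) * a j
      + (1 - p) * ∑ k ∈ Finset.range (j + 1), (1 - r) ^ (j - k) * π k := by
    intro j
    rw [ha (j+1), ha j, Finset.sum_range_succ]
    have hz : ((j + 1 : ℕ) : ℝ) - ((j + 1 : ℕ) : ℝ) = 0 := by ring
    rw [Finset.mul_sum, Finset.mul_sum, ← Finset.sum_add_distrib]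
    have hcong : ∀ k ∈ Finset.range (j + 1),
        (((j + 1 : ℕ) : ℝ) - (k : ℝ)) * (1 - p) * (1 - r) ^ (j + 1 - k - 1) * π k
        = (1 - r) * (((j : ℝ) - (k : ℝ)) * (1 - p) * (1 - r) ^ (j - k - 1) * π k)
          + (1 - p) * ((1 - r) ^ (j - k) * π k) := by
      intro k hk
      have hk' : k ≤ j := Nat.lt_succ_iff.mp (Finset.mem_range.mp hk)
      have h1 : j + 1 - k - 1 = j - k := by omega
      have key : ((j : ℝ) - (k : ℝ)) * (1 - r) ^ (j - k)
          = (1 - r) * (((j : ℝ) - (k : ℝ)) * (1 - r) ^ (j - k - 1)) := by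
        rcases eq_or_lt_of_le hk' with heq | hlt
        · subst heq; simp
        · obtain ⟨m, hm⟩ : ∃ m, j - k = m + 1 := ⟨j - k - 1, by omega⟩
          rw [hm, Nat.add_sub_cancel, pow_succ]
          ring
      rw [h1]
      push_cast
      linear_combination (1 - p) * π k * key
    rw [Finset.sum_congr rfl hcong, hz]
    ring
  intro j
  induction j with
  | zero =>
    rw [ha 0]
    simp [hp]
    field_simp
    ring
  | succ j ih =>
    rw [hrec j, ih, hS j, hp]
    field_simp
    ring
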